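/- arXiv:2402.15324 — 5 statements merged into one kernel-verified Lean document; each statement's English description precedes it below -/
import Mathlib

section
/- Let N be a finite set with |N| = n ≥ 1, let v : 2^N → ℝ, and let i ∈ N. Then (1/n!)·∑_σ (v(C_i^σ ∪ {i}) − v(C_i^σ)) = ∑_{C ⊆ N\{i}} (|C|!·(n − |C| − 1)!/n!)·(v(C ∪ {i}) − v(C)), where the sum on the left ranges over all n! linear orderings σ of N; i.e., the permutation-average of marginal contributions equals the coalition-weighted sum defining the Shapley value. -/
lemma pos_eq {α : Type*} [Fintype α] [DecidableEq α] {n : ℕ} (σ : α ≃ Fin n) (i : α) :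
    (Finset.univ.filter fun j => σ j < σ i).card = (σ i : ℕ) := by
  rw [show ((σ i : ℕ)) = (Finset.Iio (σ i)).card from (Fin.card_Iio _).symm]
  apply Finset.card_bij (fun j _ => σ j)
  · intro a ha
    simp only [Finset.mem_filter] at ha
    simpa using ha.2
  · intro a _ b _ h
    exact σ.injective h
  · intro b hb
    refine ⟨σ.symm b, ?_, by simp⟩
    simp only [Finset.mem_filter, Finset.mem_univ, true_and, Equiv.apply_symm_apply]
    simpa using hb

lemma count_lemma {α : Type*} [Fintype α] [DecidableEq α] {n : ℕ}
    (hn : Fintype.card α = n) (i : α) (C : Finset α) (hi : i ∉ C) :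
    (Finset.univ.filter fun σ : α ≃ Fin n =>
        (Finset.univ.filter fun j => σ j < σ i) = C).card
      = C.card.factorial * (n - C.card - 1).factorial := by
  classical
  set c := C.card with hc
  have hcn : c + 1 ≤ n := by
    have h1 : (insert i C).card = c + 1 := Finset.card_insert_of_notMem hi
    have h2 := Finset.card_le_univ (insert i C)
    rw [hn] at h2
    omega
  set D : Finset α := Finset.univ \ insert i C with hD
  have hDcard : D.card = n - c - 1 := by
    rw [hD, Finset.card_sdiff_of_subset (Finset.subset_univ _), Finset.card_univ, hn,
      Finset.card_insert_of_notMem hi]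
    omega
  have hiD : i ∉ D := by simp [hD]
  have hmemD : ∀ j, j ∉ C → j ≠ i → j ∈ D := by
    intro j h1 h2; simp [hD, h1, h2]
  have key : ∀ σ : α ≃ Fin n, (Finset.univ.filter fun j => σ j < σ i) = C →
      (σ i : ℕ) = c ∧ (∀ j ∈ C, (σ j : ℕ) < c) ∧
      (∀ j ∈ D, c + 1 ≤ (σ j : ℕ) ∧ (σ j : ℕ) < n) := by
    intro σ hσ
    have hpos : (σ i : ℕ) = c := by rw [← pos_eq σ i, hσ]
    have hmem : ∀ j, σ j < σ i ↔ j ∈ C := by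
      intro j
      conv_rhs => rw [← hσ]
      simp
    refine ⟨hpos, fun j hj => ?_, fun j hj => ?_⟩
    · have h := (hmem j).2 hj
      rw [Fin.lt_def, hpos] at h
      exact h
    · have h1 : ¬ σ j < σ i := by
        rw [hmem]
        intro h; rw [hD] at hj; simp at hj; tauto
      have h2 : σ j ≠ σ i := by
        intro h
        have := σ.injective h
        subst this
        exact hiD hj
      have h3 := (σ j).isLt
      have h2' : (σ j : ℕ) ≠ (σ i : ℕ) := fun h => h2 (Fin.ext h)
      rw [Fin.lt_def, not_lt, hpos] at h1
      rw [hpos] at h2'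
      omega
  have hcardC : Fintype.card ↥C = c := Fintype.card_coe C
  have hcardD : Fintype.card ↥D = n - c - 1 := by rw [Fintype.card_coe, hDcard]
  rw [← Fintype.card_subtype]
  have hle1 : Fintype.card {σ : α ≃ Fin n // (Finset.univ.filter fun j => σ j < σ i) = C}
      ≤ Fintype.card ((↥C ≃ Fin c) × (↥D ≃ Fin (n - c - 1))) := by
    let f1 : ∀ σ : {σ : α ≃ Fin n // (Finset.univ.filter fun j => σ j < σ i) = C},
        ↥C → Fin c := fun σ x => ⟨(σ.1 x : ℕ), (key σ.1 σ.2).2.1 x x.2⟩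
    let f2 : ∀ σ : {σ : α ≃ Fin n // (Finset.univ.filter fun j => σ j < σ i) = C},
        ↥D → Fin (n - c - 1) := fun σ x => ⟨(σ.1 x : ℕ) - (c + 1), by
          have := (key σ.1 σ.2).2.2 x x.2; omega⟩
    have hf1 : ∀ σ x, ((f1 σ x : ℕ)) = (σ.1 x : ℕ) := fun σ x => rfl
    have hf2 : ∀ σ x, ((f2 σ x : ℕ)) = (σ.1 x : ℕ) - (c + 1) := fun σ x => rfl
    have inj1 : ∀ σ, Function.Injective (f1 σ) := by
      intro σ x y h
      have h' := congrArg Fin.val h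
      rw [hf1, hf1] at h'
      exact Subtype.ext (σ.1.injective (Fin.ext h'))
    have inj2 : ∀ σ, Function.Injective (f2 σ) := by
      intro σ x y h
      have h' := congrArg Fin.val h
      rw [hf2, hf2] at h'
      have hx := (key σ.1 σ.2).2.2 x x.2
      have hy := (key σ.1 σ.2).2.2 y y.2
      exact Subtype.ext (σ.1.injective (Fin.ext (by omega)))
    refine Fintype.card_le_of_injective (fun σ =>
      (Equiv.ofBijective (f1 σ) ((Fintype.bijective_iff_injective_and_card _).2
          ⟨inj1 σ, by simp [hcardC]⟩),
       Equiv.ofBijective (f2 σ) ((Fintype.bijective_iff_injective_and_card _).2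
          ⟨inj2 σ, by simp [hcardD]⟩))) ?_
    intro σ τ h
    have h1 := congrArg Prod.fst h
    have h2 := congrArg Prod.snd h
    simp only at h1 h2
    apply Subtype.ext
    apply Equiv.ext
    intro j
    apply Fin.ext
    by_cases hjC : j ∈ C
    · have h3 := congrArg (fun e => ((e ⟨j, hjC⟩ : Fin c) : ℕ)) h1
      simp only [Equiv.ofBijective_apply] at h3
      exact h3
    · by_cases hji : j = i
      · subst hji
        rw [(key σ.1 σ.2).1, (key τ.1 τ.2).1]
      · have hjD : j ∈ D := hmemD j hjC hji
        have h3 := congrArg (fun e => ((e ⟨j, hjD⟩ : Fin (n - c - 1)) : ℕ)) h2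
        simp only [Equiv.ofBijective_apply, hf2] at h3
        have hx := (key σ.1 σ.2).2.2 j hjD
        have hy := (key τ.1 τ.2).2.2 j hjD
        omega
  have hle2 : Fintype.card ((↥C ≃ Fin c) × (↥D ≃ Fin (n - c - 1)))
      ≤ Fintype.card {σ : α ≃ Fin n // (Finset.univ.filter fun j => σ j < σ i) = C} := by
    let mkf : ((↥C ≃ Fin c) × (↥D ≃ Fin (n - c - 1))) → α → Fin n := fun p j =>
      if h : j ∈ C then ⟨(p.1 ⟨j, h⟩ : ℕ), by have := (p.1 ⟨j, h⟩).isLt; omega⟩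
      else if h2 : j ∈ D then ⟨c + 1 + (p.2 ⟨j, h2⟩ : ℕ), by
        have := (p.2 ⟨j, h2⟩).isLt; omega⟩
      else ⟨c, by omega⟩
    have hmkC : ∀ p j (h : j ∈ C), (mkf p j : ℕ) = (p.1 ⟨j, h⟩ : ℕ) := by
      intro p j h; simp only [mkf, dif_pos h]
    have hmkD : ∀ p j (h : j ∉ C) (h2 : j ∈ D),
        (mkf p j : ℕ) = c + 1 + (p.2 ⟨j, h2⟩ : ℕ) := by
      intro p j h h2; simp only [mkf, dif_neg h, dif_pos h2]
    have hmkI : ∀ p, (mkf p i : ℕ) = c := by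
      intro p; simp only [mkf, dif_neg hi, dif_neg hiD]
    have hval : ∀ p j, ((mkf p j : ℕ) < c ↔ j ∈ C) ∧ ((mkf p j : ℕ) = c ↔ j = i) := by
      intro p j
      by_cases h : j ∈ C
      · have hlt := (p.1 ⟨j, h⟩).isLt
        rw [hmkC p j h]
        exact ⟨by simpa using h, by
          constructor
          · omega
          · intro hj; subst hj; exact absurd h hi⟩
      · by_cases h2 : j ∈ D
        · rw [hmkD p j h h2]
          refine ⟨⟨by omega, fun hh => absurd hh h⟩, ⟨by omega, ?_⟩⟩
          intro hj; subst hj; exact absurd h2 hiD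
        · have hji : j = i := by
            by_contra hji
            exact h2 (hmemD j h hji)
          subst hji
          rw [hmkI p]
          exact ⟨⟨by omega, fun hh => absurd hh h⟩, ⟨fun _ => rfl, fun _ => rfl⟩⟩
    have hinj : ∀ p, Function.Injective (mkf p) := by
      intro p x y hxy
      have hxy' : (mkf p x : ℕ) = (mkf p y : ℕ) := congrArg Fin.val hxy
      by_cases hx : x ∈ C <;> by_cases hy : y ∈ C
      · rw [hmkC p x hx, hmkC p y hy] at hxy'
        exact Subtype.ext_iff.1 (p.1.injective (Fin.ext hxy'))
      · exfalso
        have a1 := ((hval p x).1).2 hx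
        have a2 : ¬ (mkf p y : ℕ) < c := fun hh => hy ((hval p y).1.1 hh)
        omega
      · exfalso
        have a1 := ((hval p y).1).2 hy
        have a2 : ¬ (mkf p x : ℕ) < c := fun hh => hx ((hval p x).1.1 hh)
        omega
      · by_cases hxi : x = i
        · by_cases hyi : y = i
          · rw [hxi, hyi]
          · exfalso
            have b1 := ((hval p x).2).2 hxi
            rw [hxy'] at b1
            exact hyi ((hval p y).2.1 b1)
        · by_cases hyi : y = i
          · exfalso
            have b2 := ((hval p y).2).2 hyi
            rw [← hxy'] at b2
            exact hxi ((hval p x).2.1 b2)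
          · have hxD := hmemD x hx hxi
            have hyD := hmemD y hy hyi
            rw [hmkD p x hx hxD, hmkD p y hy hyD] at hxy'
            have : (p.2 ⟨x, hxD⟩ : ℕ) = (p.2 ⟨y, hyD⟩ : ℕ) := by omega
            exact Subtype.ext_iff.1 (p.2.injective (Fin.ext this))
    have hbij : ∀ p, Function.Bijective (mkf p) := fun p =>
      (Fintype.bijective_iff_injective_and_card _).2 ⟨hinj p, by simp [hn]⟩
    have hmemS : ∀ p, (Finset.univ.filter fun j =>
        (Equiv.ofBijective (mkf p) (hbij p)) j < (Equiv.ofBijective (mkf p) (hbij p)) i) = C := by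
      intro p
      ext j
      simp only [Finset.mem_filter, Finset.mem_univ, true_and, Equiv.ofBijective_apply,
        Fin.lt_def]
      rw [hmkI p]
      exact (hval p j).1
    refine Fintype.card_le_of_injective (fun p =>
      ⟨Equiv.ofBijective (mkf p) (hbij p), hmemS p⟩) ?_
    intro p q h
    have h' : ∀ j, (mkf p j : ℕ) = (mkf q j : ℕ) := by
      intro j
      have := congrArg (fun s : {σ : α ≃ Fin n // (Finset.univ.filter fun j => σ j < σ i) = C}
        => ((s.1 j : ℕ))) h
      simpa [Equiv.ofBijective_apply] using this
    ext x
    case fst =>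
      have := h' x
      rw [hmkC p x x.2, hmkC q x x.2] at this
      exact this
    case snd =>
      have hxC : (x : α) ∉ C := by
        have hx2 := x.2
        simp only [hD, Finset.mem_sdiff, Finset.mem_insert] at hx2
        tauto
      have := h' x
      rw [hmkD p x hxC x.2, hmkD q x hxC x.2] at this
      exact Nat.add_left_cancel this
  have heq := le_antisymm hle1 hle2
  rw [heq, Fintype.card_prod,
    Fintype.card_equiv (Fintype.equivFinOfCardEq hcardC),
    Fintype.card_equiv (Fintype.equivFinOfCardEq hcardD), hcardC, hcardD]

/-- the permutation-average of marginal contributions equals the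
coalition-weighted sum defining the Shapley value. -/
theorem stmt_1 {α : Type*} [Fintype α] [DecidableEq α]
    (v : Finset α → ℝ) (i : α) :
    (1 / ((Fintype.card α).factorial : ℝ)) *
        ∑ σ : α ≃ Fin (Fintype.card α),
          (v (insert i (Finset.univ.filter fun j => σ j < σ i)) -
            v (Finset.univ.filter fun j => σ j < σ i))
      = ∑ C ∈ (Finset.univ.erase i).powerset,
          ((C.card.factorial : ℝ) * ((Fintype.card α - C.card - 1).factorial : ℝ) /
              ((Fintype.card α).factorial : ℝ)) *
            (v (insert i C) - v C) := by
  classical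
  have hmaps : ∀ σ : α ≃ Fin (Fintype.card α), σ ∈ (Finset.univ : Finset (α ≃ Fin (Fintype.card α))) →
      (Finset.univ.filter fun j => σ j < σ i) ∈ (Finset.univ.erase i).powerset := by
    intro σ _
    rw [Finset.mem_powerset]
    intro j hj
    simp only [Finset.mem_filter, Finset.mem_univ, true_and] at hj
    rw [Finset.mem_erase]
    exact ⟨fun h => by subst h; exact lt_irrefl _ hj, Finset.mem_univ j⟩
  rw [← Finset.sum_fiberwise_of_maps_to hmaps
    (fun σ => v (insert i (Finset.univ.filter fun j => σ j < σ i)) -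
      v (Finset.univ.filter fun j => σ j < σ i))]
  rw [Finset.mul_sum]
  apply Finset.sum_congr rfl
  intro C hC
  have hiC : i ∉ C := by
    rw [Finset.mem_powerset] at hC
    intro h
    exact (Finset.mem_erase.1 (hC h)).1 rfl
  have hinner : ∑ σ ∈ Finset.univ.filter
      (fun σ : α ≃ Fin (Fintype.card α) => (Finset.univ.filter fun j => σ j < σ i) = C),
      (v (insert i (Finset.univ.filter fun j => σ j < σ i)) -
        v (Finset.univ.filter fun j => σ j < σ i))
      = (C.card.factorial * (Fintype.card α - C.card - 1).factorial : ℕ) *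
          (v (insert i C) - v C) := by
    rw [Finset.sum_congr rfl (fun σ hσ => by
      rw [(Finset.mem_filter.1 hσ).2])]
    rw [Finset.sum_const, count_lemma rfl i C hiC, nsmul_eq_mul]
  rw [hinner]
  push_cast
  ring
end

section
/- Let v : 2^N → ℝ be supermodular on the subsets of a finite set N with v(∅) = 0, and let σ be a linear ordering of N with predecessor coalitions C_i^σ. Then the marginal contribution vector x given by x_i = v(C_i^σ ∪ {i}) − v(C_i^σ) lies in the core: for every coalition C ⊆ N, ∑_{i∈C} x_i ≥ v(C). -/
/-- for a supermodular `v` with `v(∅) = 0` and a linear ordering `σ`,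
the marginal contribution vector `x_i = v(C_i^σ ∪ {i}) − v(C_i^σ)` lies in the core:
`∑_{i∈C} x_i ≥ v(C)` for every coalition `C ⊆ N`. -/
theorem stmt_10 {α : Type*} [Fintype α] [DecidableEq α]
    (v : Finset α → ℝ)
    (hsm : ∀ C D : Finset α, v C + v D ≤ v (C ∪ D) + v (C ∩ D))
    (h0 : v ∅ = 0)
    (σ : α ≃ Fin (Fintype.card α)) (C : Finset α) :
    v C ≤ ∑ i ∈ C,
        (v (insert i (Finset.univ.filter fun j => σ j < σ i)) -
          v (Finset.univ.filter fun j => σ j < σ i)) := by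
  induction C using Finset.strongInduction with
  | _ C ih =>
    rcases C.eq_empty_or_nonempty with rfl | hne
    · simp [h0]
    · obtain ⟨i, hi, hmax⟩ := C.exists_max_image (fun j => σ j) hne
      set P := (Finset.univ.filter fun j => σ j < σ i) with hP
      have hCP : C ∪ P = insert i P := by
        ext j
        simp only [Finset.mem_union, Finset.mem_insert, hP, Finset.mem_filter,
          Finset.mem_univ, true_and]
        constructor
        · rintro (hj | h)
          · rcases eq_or_lt_of_le (hmax j hj) with h | h
            · exact Or.inl (σ.injective h)
            · exact Or.inr h
          · exact Or.inr h
        · rintro (rfl | h)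
          · exact Or.inl hi
          · exact Or.inr h
      have hCiP : C ∩ P = C.erase i := by
        ext j
        simp only [Finset.mem_inter, Finset.mem_erase, hP, Finset.mem_filter,
          Finset.mem_univ, true_and]
        constructor
        · rintro ⟨hj, hlt⟩
          exact ⟨fun h => by subst h; exact lt_irrefl _ hlt, hj⟩
        · rintro ⟨hne', hj⟩
          exact ⟨hj, lt_of_le_of_ne (hmax j hj) fun h => hne' (σ.injective h)⟩
      have key := hsm C P
      rw [hCP, hCiP] at key
      have ihE := ih (C.erase i) (Finset.erase_ssubset hi)
      have hsum := Finset.add_sum_erase C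
        (fun i => v (insert i (Finset.univ.filter fun j => σ j < σ i)) -
          v (Finset.univ.filter fun j => σ j < σ i)) hi
      rw [← hsum]
      simp only [← hP] at *
      linarith
end

section
/- Let v : 2^N → ℝ be supermodular on the subsets of a finite set N with |N| = n ≥ 1 and v(∅) = 0. Then the Shapley value vector (Sh_i(v))_{i∈N} lies in the core: for every coalition C ⊆ N, ∑_{i∈C} Sh_i(v) ≥ v(C). -/
set_option linter.unusedSectionVars false

/-- The Shapley value of agent `i` for the characteristic function `v`. -/
noncomputable def shapley {α : Type*} [Fintype α] [DecidableEq α]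
    (v : Finset α → ℝ) (i : α) : ℝ :=
  ∑ C ∈ (Finset.univ.erase i).powerset,
    ((C.card.factorial : ℝ) * ((Fintype.card α - C.card - 1).factorial : ℝ) /
        ((Fintype.card α).factorial : ℝ)) *
      (v (insert i C) - v C)

namespace Stmt12Aux

open Finset

variable {α : Type*} [Fintype α] [DecidableEq α]

def predSet (σ : Fin (Fintype.card α) ≃ α) (i : α) : Finset α :=
  Finset.univ.filter fun a => σ.symm a < σ.symm i

lemma mem_predSet {σ : Fin (Fintype.card α) ≃ α} {i a : α} :
    a ∈ predSet σ i ↔ σ.symm a < σ.symm i := by simp [predSet]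

lemma notMem_predSet_self (σ : Fin (Fintype.card α) ≃ α) (i : α) :
    i ∉ predSet σ i := by simp [mem_predSet]

lemma predSet_eq_image (σ : Fin (Fintype.card α) ≃ α) (i : α) :
    predSet σ i = (Finset.Iio (σ.symm i)).image σ := by
  ext a
  simp only [mem_predSet, mem_image, mem_Iio]
  constructor
  · intro h; exact ⟨σ.symm a, h, σ.apply_symm_apply a⟩
  · rintro ⟨b, hb, rfl⟩; simpa using hb

lemma card_predSet (σ : Fin (Fintype.card α) ≃ α) (i : α) :
    (predSet σ i).card = σ.symm i := by
  rw [predSet_eq_image, Finset.card_image_of_injective _ σ.injective, Fin.card_Iio]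

def toPair {i : α} {C : Finset α} (hkn : C.card < Fintype.card α)
    (σ : Fin (Fintype.card α) ≃ α) (hσ : predSet σ i = C) :
    (Fin C.card ↪ {x // x ∈ C}) ×
      (Fin (Fintype.card α - C.card - 1) ↪ {x // x ∈ ((insert i C)ᶜ : Finset α)}) :=
  have hsi : ((σ.symm i : ℕ)) = C.card := by rw [← hσ, card_predSet]
  have hiC : i ∉ C := fun h => notMem_predSet_self σ i (hσ ▸ h)
  (⟨fun j => ⟨σ (Fin.castLE hkn.le j), by
      have hm : σ (Fin.castLE hkn.le j) ∈ predSet σ i := by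
        rw [mem_predSet, Equiv.symm_apply_apply, Fin.lt_def, hsi]
        exact j.isLt
      exact hσ ▸ hm⟩,
    fun a b hab => by
      have h2 := σ.injective (Subtype.ext_iff.mp hab)
      have h3 := congrArg Fin.val h2
      simp only [Fin.coe_castLE] at h3
      exact Fin.ext h3⟩,
   ⟨fun j => ⟨σ ⟨C.card + 1 + (j : ℕ), by have := j.isLt; omega⟩, by
      rw [Finset.mem_compl, Finset.mem_insert]
      push_neg
      constructor
      · intro h
        have : (⟨C.card + 1 + (j : ℕ), by have := j.isLt; omega⟩ : Fin (Fintype.card α)) = σ.symm i := by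
          rw [Equiv.eq_symm_apply, h]
        have := congrArg Fin.val this
        simp only [hsi] at this
        omega
      · intro h
        have h2 : σ ⟨C.card + 1 + (j : ℕ), by have := j.isLt; omega⟩ ∈ predSet σ i := by
          rw [hσ]; exact h
        rw [mem_predSet, Equiv.symm_apply_apply] at h2
        have h3 : C.card + 1 + (j : ℕ) < (σ.symm i : ℕ) := h2
        omega⟩,
    fun a b hab => by
      have h2 := σ.injective (Subtype.ext_iff.mp hab)
      simp only [Fin.mk.injEq] at h2
      exact Fin.ext (by omega)⟩)

/-- Glue two embeddings into a map `Fin n → α`, putting `i` at position `C.card`. -/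
def glue (i : α) (C : Finset α)
    (e₁ : Fin C.card ↪ {x // x ∈ C})
    (e₂ : Fin (Fintype.card α - C.card - 1) ↪ {x // x ∈ ((insert i C)ᶜ : Finset α)})
    (j : Fin (Fintype.card α)) : α :=
  if h : (j : ℕ) < C.card then (e₁ ⟨j, h⟩ : α)
  else if h' : (j : ℕ) = C.card then i
  else (e₂ ⟨(j : ℕ) - (C.card + 1), by have := j.isLt; omega⟩ : α)

variable {i : α} {C : Finset α}
  {e₁ : Fin C.card ↪ {x // x ∈ C}}
  {e₂ : Fin (Fintype.card α - C.card - 1) ↪ {x // x ∈ ((insert i C)ᶜ : Finset α)}}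

lemma glue_lt {j : Fin (Fintype.card α)} (h : (j : ℕ) < C.card) :
    glue i C e₁ e₂ j = (e₁ ⟨j, h⟩ : α) := dif_pos h

lemma glue_eq {j : Fin (Fintype.card α)} (h : (j : ℕ) = C.card) :
    glue i C e₁ e₂ j = i := by
  rw [glue, dif_neg (by omega), dif_pos h]

lemma glue_gt {j : Fin (Fintype.card α)} (h : C.card < (j : ℕ)) :
    glue i C e₁ e₂ j
      = (e₂ ⟨(j : ℕ) - (C.card + 1), by have := j.isLt; omega⟩ : α) := by
  rw [glue, dif_neg (by omega), dif_neg (by omega)]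

lemma glue_injective (hiC : i ∉ C) : Function.Injective (glue i C e₁ e₂) := by
  have m1 : ∀ x : Fin C.card, (e₁ x : α) ∈ C := fun x => (e₁ x).2
  have m2 : ∀ x, (e₂ x : α) ∉ insert i C := fun x => Finset.mem_compl.mp (e₂ x).2
  have m2' : ∀ x, (e₂ x : α) ≠ i := fun x h => by
    have h3 := m2 x
    rw [h] at h3
    exact h3 (Finset.mem_insert_self i C)
  intro a b hab
  rcases lt_trichotomy ((a : ℕ)) C.card with ha | ha | ha <;>
    rcases lt_trichotomy ((b : ℕ)) C.card with hb | hb | hb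
  · rw [glue_lt ha, glue_lt hb] at hab
    have h2 := e₁.injective (Subtype.ext hab)
    simp only [Fin.mk.injEq] at h2
    exact Fin.ext h2
  · rw [glue_lt ha, glue_eq hb] at hab
    exact absurd (hab ▸ m1 ⟨a, ha⟩) hiC
  · rw [glue_lt ha, glue_gt hb] at hab
    exact absurd (Finset.mem_insert_of_mem (hab ▸ m1 ⟨a, ha⟩)) (m2 _)
  · rw [glue_eq ha, glue_lt hb] at hab
    exact absurd (hab ▸ m1 ⟨b, hb⟩) hiC
  · exact Fin.ext (ha.trans hb.symm)
  · rw [glue_eq ha, glue_gt hb] at hab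
    exact absurd hab.symm (m2' _)
  · rw [glue_gt ha, glue_lt hb] at hab
    exact absurd (Finset.mem_insert_of_mem (hab.symm ▸ m1 ⟨b, hb⟩)) (m2 _)
  · rw [glue_gt ha, glue_eq hb] at hab
    exact absurd hab (m2' _)
  · rw [glue_gt ha, glue_gt hb] at hab
    have h2 := e₂.injective (Subtype.ext hab)
    simp only [Fin.mk.injEq] at h2
    exact Fin.ext (by omega)

noncomputable def fromPair (hiC : i ∉ C)
    (e₁ : Fin C.card ↪ {x // x ∈ C})
    (e₂ : Fin (Fintype.card α - C.card - 1) ↪ {x // x ∈ ((insert i C)ᶜ : Finset α)}) :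
    Fin (Fintype.card α) ≃ α :=
  Equiv.ofBijective (glue i C e₁ e₂)
    ((Fintype.bijective_iff_injective_and_card _).mpr ⟨glue_injective hiC, by simp⟩)

lemma fromPair_apply (hiC : i ∉ C) (j : Fin (Fintype.card α)) :
    fromPair hiC e₁ e₂ j = glue i C e₁ e₂ j := rfl

lemma predSet_fromPair (hiC : i ∉ C) (hkn : C.card < Fintype.card α) :
    predSet (fromPair hiC e₁ e₂) i = C := by
  have hsym : (fromPair hiC e₁ e₂).symm i = ⟨C.card, hkn⟩ := by
    rw [Equiv.symm_apply_eq]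
    exact (glue_eq rfl).symm
  ext a
  rw [mem_predSet, hsym]
  obtain ⟨j, rfl⟩ : ∃ j, (fromPair hiC e₁ e₂) j = a :=
    ⟨_, (fromPair hiC e₁ e₂).apply_symm_apply a⟩
  rw [Equiv.symm_apply_apply, Fin.lt_def]
  constructor
  · intro h
    rw [fromPair_apply, glue_lt h]
    exact (e₁ ⟨j, h⟩).2
  · intro hmem
    by_contra hnot
    push_neg at hnot
    rcases eq_or_lt_of_le hnot with heq | hlt
    · rw [fromPair_apply, glue_eq heq.symm] at hmem
      exact hiC hmem
    · rw [fromPair_apply, glue_gt hlt] at hmem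
      exact Finset.mem_compl.mp (e₂ _).2 (Finset.mem_insert_of_mem hmem)

noncomputable def fiberEquiv (hiC : i ∉ C) (hkn : C.card < Fintype.card α) :
    {σ : Fin (Fintype.card α) ≃ α // predSet σ i = C} ≃
      ((Fin C.card ↪ {x // x ∈ C}) ×
        (Fin (Fintype.card α - C.card - 1) ↪ {x // x ∈ ((insert i C)ᶜ : Finset α)})) where
  toFun := fun σ => toPair hkn σ.1 σ.2
  invFun := fun p => ⟨fromPair hiC p.1 p.2, predSet_fromPair hiC hkn⟩
  left_inv := by
    rintro ⟨σ, hσ⟩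
    have hsi : ((σ.symm i : ℕ)) = C.card := by rw [← hσ, card_predSet]
    apply Subtype.ext
    apply Equiv.ext
    intro j
    show glue i C (toPair hkn σ hσ).1 (toPair hkn σ hσ).2 j = σ j
    rcases lt_trichotomy ((j : ℕ)) C.card with h | h | h
    · rw [glue_lt h]
      show σ (Fin.castLE hkn.le ⟨j, h⟩) = σ j
      exact congrArg σ (Fin.ext rfl)
    · rw [glue_eq h]
      have hj : j = σ.symm i := Fin.ext (by rw [hsi]; exact h)
      rw [hj, Equiv.apply_symm_apply]
    · rw [glue_gt h]
      show σ ⟨C.card + 1 + ((j : ℕ) - (C.card + 1)), _⟩ = σ j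
      exact congrArg σ (Fin.ext (by simp only; omega))
  right_inv := by
    rintro ⟨e₁, e₂⟩
    have hiC' : i ∉ C := hiC
    refine Prod.ext ?_ ?_
    · apply Function.Embedding.ext
      intro j
      apply Subtype.ext
      show glue i C e₁ e₂ (Fin.castLE hkn.le j) = (e₁ j : α)
      rw [glue_lt (show ((Fin.castLE hkn.le j : Fin _) : ℕ) < C.card from j.isLt)]
      exact congrArg (fun x => (e₁ x : α)) (Fin.ext rfl)
    · apply Function.Embedding.ext
      intro j
      apply Subtype.ext
      show glue i C e₁ e₂ ⟨C.card + 1 + (j : ℕ), _⟩ = (e₂ j : α)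
      rw [glue_gt (show C.card < C.card + 1 + (j : ℕ) by omega)]
      exact congrArg (fun x => (e₂ x : α)) (Fin.ext (by simp only; omega))

lemma card_fiber (hiC : i ∉ C) (hkn : C.card < Fintype.card α) :
    (Finset.univ.filter fun σ : Fin (Fintype.card α) ≃ α => predSet σ i = C).card
      = C.card.factorial * (Fintype.card α - C.card - 1).factorial := by
  classical
  have h1 : (Finset.univ.filter fun σ : Fin (Fintype.card α) ≃ α => predSet σ i = C).card
      = Fintype.card {σ : Fin (Fintype.card α) ≃ α // predSet σ i = C} :=
    (Fintype.card_subtype _).symm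
  have hD : Fintype.card {x // x ∈ ((insert i C)ᶜ : Finset α)}
      = Fintype.card α - C.card - 1 := by
    rw [Fintype.card_coe, Finset.card_compl, Finset.card_insert_of_notMem hiC]
    omega
  rw [h1, Fintype.card_congr (fiberEquiv hiC hkn), Fintype.card_prod,
    Fintype.card_embedding_eq, Fintype.card_embedding_eq, Fintype.card_coe, hD,
    Fintype.card_fin, Fintype.card_fin, Nat.descFactorial_self, Nat.descFactorial_self]

/-- Telescoping identity. -/
lemma telescope (v : Finset α → ℝ) (σ : Fin (Fintype.card α) ≃ α) (C : Finset α) :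
    ∑ i ∈ C, (v (insert i (predSet σ i ∩ C)) - v (predSet σ i ∩ C)) = v C - v ∅ := by
  induction C using Finset.strongInduction with
  | _ C ih =>
    rcases C.eq_empty_or_nonempty with rfl | hne
    · simp
    · -- take the σ-last element of C
      obtain ⟨i, hiC, hmax⟩ := Finset.exists_max_image C (fun a => σ.symm a) hne
      have hkey : ∀ j ∈ C.erase i, predSet σ j ∩ C = predSet σ j ∩ C.erase i := by
        intro j hj
        ext a
        simp only [mem_inter, mem_erase]
        refine ⟨fun ⟨h1, h2⟩ => ⟨h1, ?_, h2⟩, fun ⟨h1, h2, h3⟩ => ⟨h1, h3⟩⟩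
        rintro rfl
        rw [mem_predSet] at h1
        exact absurd (hmax j (mem_of_mem_erase hj)) (not_le_of_gt h1)
      have hlast : predSet σ i ∩ C = C.erase i := by
        ext a
        simp only [mem_inter, mem_erase, mem_predSet]
        constructor
        · rintro ⟨h1, h2⟩
          exact ⟨fun h => by subst h; exact lt_irrefl _ h1, h2⟩
        · rintro ⟨hne', haC⟩
          refine ⟨lt_of_le_of_ne (hmax a haC) ?_, haC⟩
          intro h
          exact hne' (σ.symm.injective h)
      rw [← Finset.sum_erase_add _ _ hiC]
      have hsub : C.erase i ⊂ C := Finset.erase_ssubset hiC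
      rw [Finset.sum_congr rfl (fun j hj => by rw [hkey j hj]), ih _ hsub, hlast,
        Finset.insert_erase hiC]
      ring

/-- Supermodularity: each marginal contribution dominates the restricted one. -/
lemma marginal_ge (v : Finset α → ℝ)
    (hsm : ∀ C D : Finset α, v C + v D ≤ v (C ∪ D) + v (C ∩ D))
    (σ : Fin (Fintype.card α) ≃ α) (C : Finset α) :
    v C - v ∅ ≤ ∑ i ∈ C, (v (insert i (predSet σ i)) - v (predSet σ i)) := by
  rw [← telescope v σ C]
  refine Finset.sum_le_sum fun i hi => ?_
  have h := hsm (predSet σ i) (insert i (predSet σ i ∩ C))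
  have hu : predSet σ i ∪ insert i (predSet σ i ∩ C) = insert i (predSet σ i) := by
    ext a; simp only [mem_union, mem_insert, mem_inter]; tauto
  have hn : predSet σ i ∩ insert i (predSet σ i ∩ C) = predSet σ i ∩ C := by
    ext a
    simp only [mem_inter, mem_insert]
    constructor
    · rintro ⟨h1, rfl | ⟨h2, h3⟩⟩
      · exact absurd h1 (notMem_predSet_self σ _)
      · exact ⟨h1, h3⟩
    · rintro ⟨h1, h2⟩; exact ⟨h1, Or.inr ⟨h1, h2⟩⟩
  rw [hu, hn] at h
  linarith

lemma shapley_eq (v : Finset α → ℝ) (i : α) :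
    shapley v i = (∑ σ : Fin (Fintype.card α) ≃ α,
      (v (insert i (predSet σ i)) - v (predSet σ i))) / (Fintype.card α).factorial := by
  have hmaps : ∀ σ : Fin (Fintype.card α) ≃ α, σ ∈ (univ : Finset _) →
      predSet σ i ∈ (Finset.univ.erase i).powerset := by
    intro σ _
    rw [Finset.mem_powerset]
    intro a ha
    rw [Finset.mem_erase]
    refine ⟨fun h => notMem_predSet_self σ i (h ▸ ha), Finset.mem_univ a⟩
  rw [show (∑ σ : Fin (Fintype.card α) ≃ α, (v (insert i (predSet σ i)) - v (predSet σ i)))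
      = ∑ C ∈ (Finset.univ.erase i).powerset,
          ∑ σ ∈ univ.filter (fun σ : Fin (Fintype.card α) ≃ α => predSet σ i = C),
            (v (insert i (predSet σ i)) - v (predSet σ i)) from
    (Finset.sum_fiberwise_of_maps_to hmaps _).symm]
  rw [shapley, Finset.sum_div]
  refine Finset.sum_congr rfl fun C hC => ?_
  have hCsub : C ⊆ univ.erase i := Finset.mem_powerset.mp hC
  have hiC : i ∉ C := fun h => (Finset.mem_erase.mp (hCsub h)).1 rfl
  have hkn : C.card < Fintype.card α := by
    have h2 := Finset.card_le_card hCsub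
    rw [Finset.card_erase_of_mem (mem_univ i), Finset.card_univ] at h2
    have h3 : 0 < Fintype.card α := Fintype.card_pos_iff.mpr ⟨i⟩
    omega
  rw [Finset.sum_congr rfl (fun σ hσ => by rw [(Finset.mem_filter.mp hσ).2]),
    Finset.sum_const, card_fiber hiC hkn, nsmul_eq_mul]
  push_cast
  ring


end Stmt12Aux

/-- for a supermodular `v` with `v(∅) = 0`, the Shapley value vector lies
in the core: `∑_{i∈C} Sh_i(v) ≥ v(C)` for every coalition `C ⊆ N`. -/
theorem stmt_12 {α : Type*} [Fintype α] [DecidableEq α] [Nonempty α]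
    (v : Finset α → ℝ)
    (hsm : ∀ C D : Finset α, v C + v D ≤ v (C ∪ D) + v (C ∩ D))
    (h0 : v ∅ = 0)
    (C : Finset α) :
    v C ≤ ∑ i ∈ C, shapley v i := by
  classical
  have hcard : Fintype.card (Fin (Fintype.card α) ≃ α) = (Fintype.card α).factorial := by
    rw [Fintype.card_equiv (Fintype.equivFin α).symm, Fintype.card_fin]
  have hfac : (0:ℝ) < ((Fintype.card α).factorial : ℝ) := by
    exact_mod_cast (Fintype.card α).factorial_pos
  rw [Finset.sum_congr rfl (fun i _ => Stmt12Aux.shapley_eq v i), ← Finset.sum_div,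
    le_div_iff₀ hfac, Finset.sum_comm]
  calc v C * ((Fintype.card α).factorial : ℝ)
      = ∑ _σ : Fin (Fintype.card α) ≃ α, v C := by
        rw [Finset.sum_const, Finset.card_univ, hcard, nsmul_eq_mul]; ring
    _ ≤ ∑ σ : Fin (Fintype.card α) ≃ α, ∑ i ∈ C,
          (v (insert i (Stmt12Aux.predSet σ i)) - v (Stmt12Aux.predSet σ i)) :=
        Finset.sum_le_sum fun σ _ => by
          have := Stmt12Aux.marginal_ge v hsm σ C
          rw [h0] at this
          linarith
end

section
/- With the Shapley–Bellman setup below, the Shapley–Bellman operator contracts: for all families Q = (Q_i) and Q' = (Q'_i) of per-agent Q-functions, ‖ΥQ − ΥQ'‖ ≤ γ·(max_{s∈S} ∑_{i∈N} max_{a_i∈A_i} w_i(s,a_i))·‖Q − Q'‖. In particular, if max_{s∈S} ∑_{i∈N} max_{a_i∈A_i} w_i(s,a_i) < 1/γ, then Υ decreases distances by a factor δ = γ·max_{s∈S} ∑_{i∈N} max_{a_i∈A_i} w_i(s,a_i) with 0 < δ < 1, i.e., it is a contraction mapping with respect to these norms. -/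
private lemma abs_ciSup_sub_ciSup' {α : Type*} [Fintype α] [Nonempty α]
    (f g : α → ℝ) : |(⨆ a, f a) - ⨆ a, g a| ≤ ⨆ a, |f a - g a| := by
  have bdd : ∀ h : α → ℝ, BddAbove (Set.range h) := fun h => (Set.finite_range h).bddAbove
  rw [abs_sub_le_iff]
  constructor
  · rw [sub_le_iff_le_add]
    apply ciSup_le; intro a
    calc f a = g a + (f a - g a) := by ring
    _ ≤ (⨆ a, g a) + ⨆ a, |f a - g a| :=
        add_le_add (le_ciSup (bdd g) a) ((le_abs_self _).trans (le_ciSup (bdd fun a => |f a - g a|) a))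
    _ = (⨆ a, |f a - g a|) + ⨆ a, g a := add_comm _ _
  · rw [sub_le_iff_le_add]
    apply ciSup_le; intro a
    calc g a = f a + (g a - f a) := by ring
    _ ≤ (⨆ a, f a) + ⨆ a, |f a - g a| :=
        add_le_add (le_ciSup (bdd f) a)
          ((le_abs_self _).trans ((abs_sub_comm _ _).le.trans (le_ciSup (bdd fun a => |f a - g a|) a)))
    _ = (⨆ a, |f a - g a|) + ⨆ a, f a := add_comm _ _

/-- the Shapley–Bellman operator contracts:
`‖ΥQ − ΥQ'‖ ≤ γ·(max_s ∑_i max_{a_i} w_i(s,a_i))·‖Q − Q'‖`, where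
`(ΥQ)_i(s,a) = w_i(s,a_i)·∑_{s'} P(s'|s,a)·(R(s,a) + γ·∑_j max_{a_j'} Q_j(s',a_j')) − b_i(s)`
and `‖Q − Q'‖ = max_{s,a} ∑_i |Q_i(s,a_i) − Q'_i(s,a_i)|`. -/
theorem stmt_14
    {S : Type*} [Fintype S] [Nonempty S]
    {ι : Type*} [Fintype ι] [DecidableEq ι]
    {A : ι → Type*} [∀ i, Fintype (A i)] [∀ i, Nonempty (A i)]
    (P : S → (∀ i, A i) → S → ℝ)
    (hP0 : ∀ s a s', 0 ≤ P s a s')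
    (hP1 : ∀ s a, ∑ s' : S, P s a s' = 1)
    (R : S → (∀ i, A i) → ℝ)
    (w : ∀ i, S → A i → ℝ) (hw : ∀ i s ai, 0 < w i s ai)
    (b : ι → S → ℝ)
    (γ : ℝ) (hγ : 0 < γ ∧ γ < 1)
    (Q Q' : ∀ i, S → A i → ℝ) :
    (⨆ p : S × (∀ i, A i), ∑ i : ι,
        |(w i p.1 (p.2 i) *
            ∑ s' : S, P p.1 p.2 s' *
              (R p.1 p.2 + γ * ∑ j : ι, ⨆ aj : A j, Q j s' aj) - b i p.1) -
          (w i p.1 (p.2 i) *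
            ∑ s' : S, P p.1 p.2 s' *
              (R p.1 p.2 + γ * ∑ j : ι, ⨆ aj : A j, Q' j s' aj) - b i p.1)|)
      ≤ γ * (⨆ s : S, ∑ i : ι, ⨆ ai : A i, w i s ai) *
          (⨆ p : S × (∀ i, A i), ∑ i : ι, |Q i p.1 (p.2 i) - Q' i p.1 (p.2 i)|) := by
  obtain ⟨hγ0, hγ1⟩ := hγ
  set M := ⨆ p : S × (∀ i, A i), ∑ i : ι, |Q i p.1 (p.2 i) - Q' i p.1 (p.2 i)| with hMdef
  have hbddM : BddAbove (Set.range fun p : S × (∀ i, A i) =>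
      ∑ i : ι, |Q i p.1 (p.2 i) - Q' i p.1 (p.2 i)|) := (Set.finite_range _).bddAbove
  have hM0 : 0 ≤ M :=
    le_trans (Finset.sum_nonneg fun i _ => abs_nonneg _)
      (le_ciSup hbddM (Classical.arbitrary _))
  have key : ∀ s' : S,
      |(∑ j : ι, ⨆ aj : A j, Q j s' aj) - ∑ j : ι, ⨆ aj : A j, Q' j s' aj| ≤ M := by
    intro s'
    choose a ha using fun j => Finite.exists_max (fun aj : A j => |Q j s' aj - Q' j s' aj|)
    calc |(∑ j : ι, ⨆ aj : A j, Q j s' aj) - ∑ j : ι, ⨆ aj : A j, Q' j s' aj|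
        = |∑ j : ι, ((⨆ aj : A j, Q j s' aj) - ⨆ aj : A j, Q' j s' aj)| := by
          rw [Finset.sum_sub_distrib]
      _ ≤ ∑ j : ι, |(⨆ aj : A j, Q j s' aj) - ⨆ aj : A j, Q' j s' aj| :=
          Finset.abs_sum_le_sum_abs _ _
      _ ≤ ∑ j : ι, ⨆ aj : A j, |Q j s' aj - Q' j s' aj| :=
          Finset.sum_le_sum fun j _ => abs_ciSup_sub_ciSup' _ _
      _ ≤ ∑ j : ι, |Q j s' (a j) - Q' j s' (a j)| :=
          Finset.sum_le_sum fun j _ => ciSup_le (ha j)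
      _ ≤ M := le_ciSup hbddM (s', a)
  set W := ⨆ s : S, ∑ i : ι, ⨆ ai : A i, w i s ai with hWdef
  apply ciSup_le
  rintro ⟨s, a⟩
  have step : ∀ i : ι,
      |(w i s (a i) * ∑ s' : S, P s a s' *
          (R s a + γ * ∑ j : ι, ⨆ aj : A j, Q j s' aj) - b i s) -
        (w i s (a i) * ∑ s' : S, P s a s' *
          (R s a + γ * ∑ j : ι, ⨆ aj : A j, Q' j s' aj) - b i s)|
      ≤ w i s (a i) * (γ * M) := by
    intro i
    have e0 : (∑ s' : S, P s a s' * (R s a + γ * ∑ j : ι, ⨆ aj : A j, Q j s' aj)) -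
        (∑ s' : S, P s a s' * (R s a + γ * ∑ j : ι, ⨆ aj : A j, Q' j s' aj)) =
        ∑ s' : S, P s a s' *
          (γ * ((∑ j : ι, ⨆ aj : A j, Q j s' aj) - ∑ j : ι, ⨆ aj : A j, Q' j s' aj)) := by
      rw [← Finset.sum_sub_distrib]
      exact Finset.sum_congr rfl fun s' _ => by ring
    have e1 : (w i s (a i) * ∑ s' : S, P s a s' *
          (R s a + γ * ∑ j : ι, ⨆ aj : A j, Q j s' aj) - b i s) -
        (w i s (a i) * ∑ s' : S, P s a s' *
          (R s a + γ * ∑ j : ι, ⨆ aj : A j, Q' j s' aj) - b i s)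
        = w i s (a i) * ∑ s' : S, P s a s' *
            (γ * ((∑ j : ι, ⨆ aj : A j, Q j s' aj) - ∑ j : ι, ⨆ aj : A j, Q' j s' aj)) := by
      rw [← e0]; ring
    rw [e1, abs_mul, abs_of_pos (hw i s (a i))]
    refine mul_le_mul_of_nonneg_left ?_ (hw i s (a i)).le
    calc |∑ s' : S, P s a s' *
            (γ * ((∑ j : ι, ⨆ aj : A j, Q j s' aj) - ∑ j : ι, ⨆ aj : A j, Q' j s' aj))|
        ≤ ∑ s' : S, |P s a s' *
            (γ * ((∑ j : ι, ⨆ aj : A j, Q j s' aj) - ∑ j : ι, ⨆ aj : A j, Q' j s' aj))| :=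
          Finset.abs_sum_le_sum_abs _ _
      _ ≤ ∑ s' : S, P s a s' * (γ * M) := by
          refine Finset.sum_le_sum fun s' _ => ?_
          rw [abs_mul, abs_of_nonneg (hP0 s a s'), abs_mul, abs_of_pos hγ0]
          exact mul_le_mul_of_nonneg_left
            (mul_le_mul_of_nonneg_left (key s') hγ0.le) (hP0 s a s')
      _ = γ * M := by rw [← Finset.sum_mul, hP1]; ring
  calc ∑ i : ι, |(w i s (a i) * ∑ s' : S, P s a s' *
          (R s a + γ * ∑ j : ι, ⨆ aj : A j, Q j s' aj) - b i s) -
        (w i s (a i) * ∑ s' : S, P s a s' *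
          (R s a + γ * ∑ j : ι, ⨆ aj : A j, Q' j s' aj) - b i s)|
      ≤ ∑ i : ι, w i s (a i) * (γ * M) := Finset.sum_le_sum fun i _ => step i
    _ = (∑ i : ι, w i s (a i)) * (γ * M) := (Finset.sum_mul _ _ _).symm
    _ ≤ (∑ i : ι, ⨆ ai : A i, w i s ai) * (γ * M) :=
        mul_le_mul_of_nonneg_right
          (Finset.sum_le_sum fun i _ => le_ciSup ((Set.finite_range _).bddAbove) (a i))
          (mul_nonneg hγ0.le hM0)
    _ ≤ W * (γ * M) :=
        mul_le_mul_of_nonneg_right (le_ciSup ((Set.finite_range fun s : S => ∑ i : ι, ⨆ ai : A i, w i s ai).bddAbove) s)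
          (mul_nonneg hγ0.le hM0)
    _ = γ * W * M := by ring
end

section
/- With the Shapley–Bellman setup below, assume max_{s∈S} ∑_{i∈N} max_{a_i∈A_i} w_i(s,a_i) < 1/γ. Then there is at most one family Q = (Q_i : S × A_i → ℝ)_{i∈N} satisfying the Shapley–Bellman optimality equation: Q_i(s, a_i) = w_i(s,a_i)·∑_{s'∈S} P(s'|s,a)·(R(s,a) + γ·∑_{j∈N} max_{a_j'∈A_j} Q_j(s',a_j')) − b_i(s) for every i ∈ N, every s ∈ S and every joint action a ∈ A; that is, if Q and Q' both satisfy this equation then Q_i(s,a_i) = Q'_i(s,a_i) for all i, s, a_i. -/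
private lemma abs_ciSup_sub_ciSup_le' {α : Type*} [Fintype α] [Nonempty α]
    (f g : α → ℝ) (c : ℝ) (h : ∀ a, |f a - g a| ≤ c) :
    |(⨆ a, f a) - ⨆ a, g a| ≤ c := by
  rw [abs_sub_le_iff]
  constructor
  · rw [sub_le_iff_le_add]
    refine ciSup_le fun a => ?_
    have h1 := (abs_sub_le_iff.mp (h a)).1
    have h2 : g a ≤ ⨆ a, g a := le_ciSup ((Set.finite_range g).bddAbove) a
    linarith
  · rw [sub_le_iff_le_add]
    refine ciSup_le fun a => ?_
    have h1 := (abs_sub_le_iff.mp (h a)).2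
    have h2 : f a ≤ ⨆ a, f a := le_ciSup ((Set.finite_range f).bddAbove) a
    linarith

/-- under the condition `max_s ∑_i max_{a_i} w_i(s,a_i) < 1/γ`, there is at
most one family `Q = (Q_i)` satisfying the Shapley–Bellman optimality equation
`Q_i(s,a_i) = w_i(s,a_i)·∑_{s'} P(s'|s,a)·(R(s,a) + γ·∑_j max_{a_j'} Q_j(s',a_j')) − b_i(s)`
for every agent `i`, state `s` and joint action `a`. -/
theorem stmt_15
    {S : Type*} [Fintype S] [Nonempty S]
    {ι : Type*} [Fintype ι] [DecidableEq ι]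
    {A : ι → Type*} [∀ i, Fintype (A i)] [∀ i, Nonempty (A i)]
    (P : S → (∀ i, A i) → S → ℝ)
    (hP0 : ∀ s a s', 0 ≤ P s a s')
    (hP1 : ∀ s a, ∑ s' : S, P s a s' = 1)
    (R : S → (∀ i, A i) → ℝ)
    (w : ∀ i, S → A i → ℝ) (hw : ∀ i s ai, 0 < w i s ai)
    (b : ι → S → ℝ)
    (γ : ℝ) (hγ : 0 < γ ∧ γ < 1)
    (hcond : (⨆ s : S, ∑ i : ι, ⨆ ai : A i, w i s ai) < 1 / γ)
    (Q Q' : ∀ i, S → A i → ℝ)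
    (hQ : ∀ (i : ι) (s : S) (a : ∀ j, A j),
      Q i s (a i) =
        w i s (a i) *
          ∑ s' : S, P s a s' *
            (R s a + γ * ∑ j : ι, ⨆ aj : A j, Q j s' aj) - b i s)
    (hQ' : ∀ (i : ι) (s : S) (a : ∀ j, A j),
      Q' i s (a i) =
        w i s (a i) *
          ∑ s' : S, P s a s' *
            (R s a + γ * ∑ j : ι, ⨆ aj : A j, Q' j s' aj) - b i s) :
    ∀ (i : ι) (s : S) (ai : A i), Q i s ai = Q' i s ai := by
  classical
  set V : S → ℝ := fun s => ∑ j : ι, ⨆ aj : A j, Q j s aj with hV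
  set V' : S → ℝ := fun s => ∑ j : ι, ⨆ aj : A j, Q' j s aj with hV'
  set D : ℝ := ⨆ s : S, |V s - V' s| with hD
  have bddS : BddAbove (Set.range fun s : S => |V s - V' s|) :=
    (Set.finite_range _).bddAbove
  have hDnn : 0 ≤ D :=
    le_trans (abs_nonneg _) (le_ciSup bddS (Classical.arbitrary S))
  have hDle : ∀ s, |V s - V' s| ≤ D := fun s => le_ciSup bddS s
  -- pointwise difference identity
  have hdiff : ∀ (i : ι) (s : S) (a : ∀ j, A j),
      Q i s (a i) - Q' i s (a i)
        = w i s (a i) * (γ * ∑ s' : S, P s a s' * (V s' - V' s')) := by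
    intro i s a
    have hsum :
        (∑ s' : S, P s a s' * (R s a + γ * V s'))
          - (∑ s' : S, P s a s' * (R s a + γ * V' s'))
        = γ * ∑ s' : S, P s a s' * (V s' - V' s') := by
      rw [← Finset.sum_sub_distrib, Finset.mul_sum]
      exact Finset.sum_congr rfl fun s' _ => by ring
    rw [hQ i s a, hQ' i s a]
    linear_combination (w i s (a i)) * hsum
  -- pointwise bound
  have hbound : ∀ (i : ι) (s : S) (a : ∀ j, A j),
      |Q i s (a i) - Q' i s (a i)| ≤ w i s (a i) * (γ * D) := by
    intro i s a
    rw [hdiff i s a, abs_mul, abs_of_pos (hw i s (a i)), abs_mul,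
      abs_of_pos hγ.1]
    refine mul_le_mul_of_nonneg_left (mul_le_mul_of_nonneg_left ?_ hγ.1.le)
      (hw i s (a i)).le
    calc |∑ s' : S, P s a s' * (V s' - V' s')|
        ≤ ∑ s' : S, |P s a s' * (V s' - V' s')| :=
          Finset.abs_sum_le_sum_abs _ _
      _ = ∑ s' : S, P s a s' * |V s' - V' s'| := by
          refine Finset.sum_congr rfl fun s' _ => ?_
          rw [abs_mul, abs_of_nonneg (hP0 s a s')]
      _ ≤ ∑ s' : S, P s a s' * D :=
          Finset.sum_le_sum fun s' _ =>
            mul_le_mul_of_nonneg_left (hDle s') (hP0 s a s')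
      _ = D := by rw [← Finset.sum_mul, hP1 s a, one_mul]
  have hbound2 : ∀ (i : ι) (s : S) (ai : A i),
      |Q i s ai - Q' i s ai| ≤ w i s ai * (γ * D) := by
    intro i s ai
    have := hbound i s (Function.update (fun j => Classical.arbitrary (A j)) i ai)
    simpa using this
  have hγD : 0 ≤ γ * D := mul_nonneg hγ.1.le hDnn
  -- sup bound per agent
  have hsup : ∀ (i : ι) (s : S),
      |(⨆ ai, Q i s ai) - ⨆ ai, Q' i s ai| ≤ (⨆ ai, w i s ai) * (γ * D) := by
    intro i s
    refine abs_ciSup_sub_ciSup_le' _ _ _ fun ai => (hbound2 i s ai).trans ?_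
    exact mul_le_mul_of_nonneg_right
      (le_ciSup ((Set.finite_range (w i s)).bddAbove) ai) hγD
  -- state value bound
  have hVs : ∀ s : S, |V s - V' s| ≤ (∑ i : ι, ⨆ ai, w i s ai) * (γ * D) := by
    intro s
    rw [Finset.sum_mul]
    calc |V s - V' s|
        = |∑ i : ι, ((⨆ ai, Q i s ai) - ⨆ ai, Q' i s ai)| := by
          rw [hV, hV']; simp [Finset.sum_sub_distrib]
      _ ≤ ∑ i : ι, |(⨆ ai, Q i s ai) - ⨆ ai, Q' i s ai| :=
          Finset.abs_sum_le_sum_abs _ _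
      _ ≤ ∑ i : ι, (⨆ ai, w i s ai) * (γ * D) :=
          Finset.sum_le_sum fun i _ => hsup i s
  set K : ℝ := ⨆ s : S, ∑ i : ι, ⨆ ai : A i, w i s ai with hK
  have hKle : ∀ s : S, (∑ i : ι, ⨆ ai, w i s ai) ≤ K := fun s =>
    le_ciSup (f := fun s : S => ∑ i : ι, ⨆ ai : A i, w i s ai)
      ((Set.finite_range _).bddAbove) s
  have hDK : D ≤ K * (γ * D) := by
    refine ciSup_le fun s => (hVs s).trans ?_
    exact mul_le_mul_of_nonneg_right (hKle s) hγD
  have hKγ : K * γ < 1 := (lt_div_iff₀ hγ.1).mp hcond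
  have hD0 : D = 0 := by nlinarith
  intro i s ai
  have h := hbound2 i s ai
  rw [hD0] at h
  simp only [mul_zero] at h
  have := abs_nonneg (Q i s ai - Q' i s ai)
  have : |Q i s ai - Q' i s ai| = 0 := le_antisymm h this
  have := abs_eq_zero.mp this
  linarith
end
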